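/- arXiv:2006.12049 — 4 statements merged into one kernel-verified Lean document; each statement's English description precedes it below -/
import Mathlib

section
/- For positive reals $p, \sigma_A^2, \sigma_B^2, \sigma_E^2$ and $\rho \in \mathbb{C}$ with $|\rho| \le 1$, define the Hermitian matrices $C_{AB} = \begin{pmatrix} p+\sigma_A^2 & p \\ p & p+\sigma_B^2\end{pmatrix}$, $C_{AE} = \begin{pmatrix} p+\sigma_A^2 & \rho p \\ \bar\rho p & p+\sigma_E^2\end{pmatrix}$, $C_{BE} = \begin{pmatrix} p+\sigma_B^2 & \rho p \\ \bar\rho p & p+\sigma_E^2\end{pmatrix}$, and $C_{ABE} = \begin{pmatrix} p+\sigma_A^2 & p & \rho p \\ p & p+\sigma_B^2 & \rho p \\ \bar\rho p & \bar\rho p & p+\sigma_E^2 \end{pmatrix}$. Then $\det(C_{AE})\det(C_{BE})\det(C_{AB}) \le (p+\sigma_A^2)(p+\sigma_B^2)(p+\sigma_E^2)\det(C_{ABE})$. -/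
lemma key_real (p x y z q : ℝ) (hp : 0 < p) (hx : 0 < x) (hy : 0 < y)
    (hz : 0 < z) (hq0 : 0 ≤ q) (hq1 : q ≤ 1) :
    ((p + x) * (p + z) - q * p ^ 2) * ((p + y) * (p + z) - q * p ^ 2)
        * ((p + x) * (p + y) - p ^ 2)
      ≤ (p + x) * (p + y) * (p + z)
        * ((p + x) * (p + y) * (p + z) - (p + z) * p ^ 2 - q * p ^ 2 * (x + y)) := by
  nlinarith [mul_nonneg (mul_nonneg (mul_nonneg hq0 (pow_pos hp 3).le) hz.le)
      (by nlinarith : (0:ℝ) ≤ 2 * x * y + p * (x + y)),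
    mul_nonneg (mul_nonneg (mul_nonneg (pow_pos hp 4).le hx.le) hy.le)
      (by nlinarith : (0:ℝ) ≤ q * (2 - q)),
    mul_nonneg (mul_nonneg (pow_pos hp 5).le (by linarith : (0:ℝ) ≤ x + y))
      (mul_nonneg hq0 (by linarith : (0:ℝ) ≤ 1 - q))]

open Matrix Complex in
open scoped ComplexOrder in
theorem stmt_0 (p sA2 sB2 sE2 : ℝ) (hp : 0 < p) (hA : 0 < sA2) (hB : 0 < sB2)
    (hE : 0 < sE2) (ρ : ℂ) (hρ : ‖ρ‖ ≤ 1) :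
    (!![((p + sA2 : ℝ) : ℂ), ρ * p; (starRingEnd ℂ) ρ * p, ((p + sE2 : ℝ) : ℂ)] :
          Matrix (Fin 2) (Fin 2) ℂ).det
      * (!![((p + sB2 : ℝ) : ℂ), ρ * p; (starRingEnd ℂ) ρ * p, ((p + sE2 : ℝ) : ℂ)] :
          Matrix (Fin 2) (Fin 2) ℂ).det
      * (!![((p + sA2 : ℝ) : ℂ), (p : ℂ); (p : ℂ), ((p + sB2 : ℝ) : ℂ)] :
          Matrix (Fin 2) (Fin 2) ℂ).det
    ≤ ((p + sA2 : ℝ) : ℂ) * ((p + sB2 : ℝ) : ℂ) * ((p + sE2 : ℝ) : ℂ)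
      * (!![((p + sA2 : ℝ) : ℂ), (p : ℂ), ρ * p;
            (p : ℂ), ((p + sB2 : ℝ) : ℂ), ρ * p;
            (starRingEnd ℂ) ρ * p, (starRingEnd ℂ) ρ * p, ((p + sE2 : ℝ) : ℂ)] :
          Matrix (Fin 3) (Fin 3) ℂ).det := by
  set q : ℝ := Complex.normSq ρ with hq
  have hq0 : 0 ≤ q := Complex.normSq_nonneg ρ
  have hq1 : q ≤ 1 := by
    have := Complex.sq_norm ρ
    nlinarith [norm_nonneg ρ]
  have hmc : ρ * (starRingEnd ℂ) ρ = (q : ℂ) := Complex.mul_conj ρ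
  have hAE : (!![((p + sA2 : ℝ) : ℂ), ρ * p; (starRingEnd ℂ) ρ * p, ((p + sE2 : ℝ) : ℂ)] :
      Matrix (Fin 2) (Fin 2) ℂ).det = (((p + sA2) * (p + sE2) - q * p ^ 2 : ℝ) : ℂ) := by
    rw [Matrix.det_fin_two_of]
    push_cast
    linear_combination (-(p:ℂ) ^ 2) * hmc
  have hBE : (!![((p + sB2 : ℝ) : ℂ), ρ * p; (starRingEnd ℂ) ρ * p, ((p + sE2 : ℝ) : ℂ)] :
      Matrix (Fin 2) (Fin 2) ℂ).det = (((p + sB2) * (p + sE2) - q * p ^ 2 : ℝ) : ℂ) := by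
    rw [Matrix.det_fin_two_of]
    push_cast
    linear_combination (-(p:ℂ) ^ 2) * hmc
  have hAB : (!![((p + sA2 : ℝ) : ℂ), (p : ℂ); (p : ℂ), ((p + sB2 : ℝ) : ℂ)] :
      Matrix (Fin 2) (Fin 2) ℂ).det = (((p + sA2) * (p + sB2) - p ^ 2 : ℝ) : ℂ) := by
    rw [Matrix.det_fin_two_of]
    push_cast
    ring
  have hABE : (!![((p + sA2 : ℝ) : ℂ), (p : ℂ), ρ * p;
            (p : ℂ), ((p + sB2 : ℝ) : ℂ), ρ * p;
            (starRingEnd ℂ) ρ * p, (starRingEnd ℂ) ρ * p, ((p + sE2 : ℝ) : ℂ)] :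
          Matrix (Fin 3) (Fin 3) ℂ).det
      = (((p + sA2) * (p + sB2) * (p + sE2) - (p + sE2) * p ^ 2
          - q * p ^ 2 * (sA2 + sB2) : ℝ) : ℂ) := by
    rw [Matrix.det_fin_three]
    simp only [Matrix.of_apply, Matrix.cons_val', Matrix.cons_val_zero, Matrix.cons_val_one,
      Matrix.head_cons, Matrix.empty_val', Matrix.cons_val_fin_one, Matrix.head_fin_const,
      Matrix.cons_val_two, Matrix.tail_cons]
    push_cast
    linear_combination (-(p:ℂ) ^ 2 * (sA2 + sB2)) * hmc
  rw [hAE, hBE, hAB, hABE, ← Complex.ofReal_mul, ← Complex.ofReal_mul,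
    ← Complex.ofReal_mul, ← Complex.ofReal_mul, ← Complex.ofReal_mul,
    Complex.real_le_real]
  calc ((p + sA2) * (p + sE2) - q * p ^ 2) * ((p + sB2) * (p + sE2) - q * p ^ 2)
        * ((p + sA2) * (p + sB2) - p ^ 2)
      ≤ (p + sA2) * (p + sB2) * (p + sE2)
        * ((p + sA2) * (p + sB2) * (p + sE2) - (p + sE2) * p ^ 2
          - q * p ^ 2 * (sA2 + sB2)) := key_real p sA2 sB2 sE2 q hp hA hB hE hq0 hq1
    _ = _ := by ring
end

section
/- Let $p, \sigma_A^2, \sigma_B^2, \sigma_E^2 > 0$ and $|\rho| \le 1$. Define $L(\sigma_A^2,\sigma_B^2,\sigma_E^2) = \log_2\left(1+\frac{p}{\sigma_A^2+\sigma_B^2+\sigma_A^2\sigma_B^2/p}\right) - \log_2\left(1+\frac{p|\rho|^2}{p(1-|\rho|^2)+\max(\sigma_A^2,\sigma_B^2)+\sigma_E^2+\max(\sigma_A^2,\sigma_B^2)\sigma_E^2/p}\right)$. Then $L > 0$ if and only if $\sigma_E^2 > p(|\rho|^2 - 1) + |\rho|^2 \min(\sigma_A^2, \sigma_B^2)$.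 -/
theorem stmt_5 (p sA2 sB2 sE2 r : ℝ) (hp : 0 < p) (hA : 0 < sA2) (hB : 0 < sB2)
    (hE : 0 < sE2) (hr0 : 0 ≤ r) (hr1 : r ≤ 1) :
    0 < Real.logb 2 (1 + p / (sA2 + sB2 + sA2 * sB2 / p))
        - Real.logb 2 (1 + p * r^2
            / (p * (1 - r^2) + max sA2 sB2 + sE2 + max sA2 sB2 * sE2 / p))
      ↔ sE2 > p * (r^2 - 1) + r^2 * min sA2 sB2 := by
  have hr2 : r^2 ≤ 1 := by nlinarith
  have hS : 0 < sA2 + sB2 + sA2 * sB2 / p := by positivity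
  have hM : (0:ℝ) < max sA2 sB2 := lt_max_of_lt_left hA
  have hD : 0 < p * (1 - r^2) + max sA2 sB2 + sE2 + max sA2 sB2 * sE2 / p := by
    have h1 : 0 ≤ p * (1 - r^2) := by nlinarith
    have h2 : 0 < max sA2 sB2 * sE2 / p := by positivity
    linarith
  have hy : 0 < 1 + p * r^2 / (p * (1 - r^2) + max sA2 sB2 + sE2 + max sA2 sB2 * sE2 / p) := by
    have : 0 ≤ p * r^2 / (p * (1 - r^2) + max sA2 sB2 + sE2 + max sA2 sB2 * sE2 / p) := by
      positivity
    linarith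
  have hx : 0 < 1 + p / (sA2 + sB2 + sA2 * sB2 / p) := by positivity
  rw [sub_pos, Real.logb_lt_logb_iff (by norm_num : (1:ℝ) < 2) hy hx,
    add_lt_add_iff_left, div_lt_div_iff₀ hD hS]
  rcases le_total sA2 sB2 with h | h
  · rw [max_eq_right h, min_eq_left h]
    rw [← mul_lt_mul_iff_of_pos_right hp]
    rw [show p * r ^ 2 * (sA2 + sB2 + sA2 * sB2 / p) * p
        = p * r ^ 2 * (p * (sA2 + sB2) + sA2 * sB2) from by
          rw [mul_assoc, add_mul, div_mul_cancel₀ _ hp.ne']; ring,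
      show p * (p * (1 - r ^ 2) + sB2 + sE2 + sB2 * sE2 / p) * p
        = p * (p * (p * (1 - r ^ 2) + sB2 + sE2) + sB2 * sE2) from by
          rw [mul_assoc, add_mul, div_mul_cancel₀ _ hp.ne']; ring]
    constructor
    · intro hlt
      by_contra hc
      push_neg at hc
      have key : (sE2 - (p * (r^2 - 1) + r^2 * sA2)) * (p + sB2) ≤ 0 :=
        mul_nonpos_of_nonpos_of_nonneg (by linarith) (by linarith)
      nlinarith [mul_nonpos_of_nonneg_of_nonpos hp.le key]
    · intro hgt
      have key : (sE2 - (p * (r^2 - 1) + r^2 * sA2)) * (p + sB2) > 0 :=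
        mul_pos (by linarith) (by linarith)
      nlinarith [mul_pos hp key]
  · rw [max_eq_left h, min_eq_right h]
    rw [← mul_lt_mul_iff_of_pos_right hp]
    rw [show p * r ^ 2 * (sA2 + sB2 + sA2 * sB2 / p) * p
        = p * r ^ 2 * (p * (sA2 + sB2) + sA2 * sB2) from by
          rw [mul_assoc, add_mul, div_mul_cancel₀ _ hp.ne']; ring,
      show p * (p * (1 - r ^ 2) + sA2 + sE2 + sA2 * sE2 / p) * p
        = p * (p * (p * (1 - r ^ 2) + sA2 + sE2) + sA2 * sE2) from by
          rw [mul_assoc, add_mul, div_mul_cancel₀ _ hp.ne']; ring]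
    constructor
    · intro hlt
      by_contra hc
      push_neg at hc
      have key : (sE2 - (p * (r^2 - 1) + r^2 * sB2)) * (p + sA2) ≤ 0 :=
        mul_nonpos_of_nonpos_of_nonneg (by linarith) (by linarith)
      nlinarith [mul_nonpos_of_nonneg_of_nonpos hp.le key]
    · intro hgt
      have key : (sE2 - (p * (r^2 - 1) + r^2 * sB2)) * (p + sA2) > 0 :=
        mul_pos (by linarith) (by linarith)
      nlinarith [mul_pos hp key]
end

section
/- Fix $p > 0$, $|\rho| < 1$, and positive constants $c_B, c_E$. As $\sigma_A^2 \to 0^+$ with $\sigma_B^2 = c_B\sigma_A^2$ and $\sigma_E^2 = c_E\sigma_A^2$, both the lower bound $L = \log_2\left(1+\frac{p}{\sigma_A^2+\sigma_B^2+\sigma_A^2\sigma_B^2/p}\right) - \log_2\left(1+\frac{p|\rho|^2}{p(1-|\rho|^2)+\max(\sigma_A^2,\sigma_B^2)+\sigma_E^2+\max(\sigma_A^2,\sigma_B^2)\sigma_E^2/p}\right)$ and the upper bound $U = \log_2\left(\frac{[(p+\sigma_A^2)(p+\sigma_E^2)-|\rho|^2p^2][(p+\sigma_B^2)(p+\sigma_E^2)-|\rho|^2p^2]}{(p+\sigma_E^2)[(p(\sigma_A^2+\sigma_B^2)+\sigma_A^2\sigma_B^2)(p+\sigma_E^2)-|\rho|^2p^2(\sigma_A^2+\sigma_B^2)]}\right)$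 satisfy $L - \log_2\left(\frac{p(1-|\rho|^2)}{\sigma_A^2+\sigma_B^2}\right) \to 0$ and $U - \log_2\left(\frac{p(1-|\rho|^2)}{\sigma_A^2+\sigma_B^2}\right) \to 0$. -/
open Filter Topology

private lemma logb_tendsto_aux (f φ : ℝ → ℝ)
    (h : f =ᶠ[𝓝[>] (0:ℝ)] fun s => Real.logb 2 (φ s))
    (hφ : Tendsto φ (𝓝[>] (0:ℝ)) (𝓝 1)) :
    Tendsto f (𝓝[>] (0:ℝ)) (𝓝 0) := by
  have h1 : Tendsto (fun s => Real.logb 2 (φ s)) (𝓝[>] (0:ℝ)) (𝓝 (Real.logb 2 1)) :=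
    (Real.continuousAt_logb one_ne_zero).tendsto.comp hφ
  rw [Real.logb_one] at h1
  exact h1.congr' h.symm

open Filter Topology in
theorem stmt_6 (p r cB cE : ℝ) (hp : 0 < p) (hr0 : 0 ≤ r) (hr : r < 1)
    (hcB : 0 < cB) (hcE : 0 < cE) :
    Tendsto (fun sA2 : ℝ =>
        (Real.logb 2 (1 + p / (sA2 + cB * sA2 + sA2 * (cB * sA2) / p))
          - Real.logb 2 (1 + p * r^2
              / (p * (1 - r^2) + max sA2 (cB * sA2) + cE * sA2
                  + max sA2 (cB * sA2) * (cE * sA2) / p)))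
        - Real.logb 2 (p * (1 - r^2) / (sA2 + cB * sA2)))
      (𝓝[>] 0) (𝓝 0)
    ∧ Tendsto (fun sA2 : ℝ =>
        Real.logb 2 (((p + sA2) * (p + cE * sA2) - r^2 * p^2)
            * ((p + cB * sA2) * (p + cE * sA2) - r^2 * p^2)
          / ((p + cE * sA2)
              * ((p * (sA2 + cB * sA2) + sA2 * (cB * sA2)) * (p + cE * sA2)
                  - r^2 * p^2 * (sA2 + cB * sA2))))
        - Real.logb 2 (p * (1 - r^2) / (sA2 + cB * sA2)))
      (𝓝[>] 0) (𝓝 0) := by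
  have hq : 0 < 1 - r^2 := by nlinarith
  constructor
  · -- lower bound
    set φ : ℝ → ℝ := fun s =>
      ((p*s*(1+cB) + cB*s^2 + p^2)
        * (p^2*(1-r^2) + p*(max s (cB*s)) + p*cE*s + (max s (cB*s))*cE*s)
        * (1+cB))
      / ((p*(1+cB) + cB*s)
        * (p^2*(1-r^2) + p*(max s (cB*s)) + p*cE*s + (max s (cB*s))*cE*s + p^2*r^2)
        * (p*(1-r^2))) with hφdef
    apply logb_tendsto_aux _ φ
    · filter_upwards [self_mem_nhdsWithin] with s hs
      simp only [Set.mem_Ioi] at hs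
      have hm : 0 < max s (cB*s) := lt_max_iff.2 (Or.inl hs)
      have hDA : 0 < s + cB * s + s * (cB * s) / p := by positivity
      have hDB : 0 < p * (1 - r^2) + max s (cB * s) + cE * s
          + max s (cB * s) * (cE * s) / p := by positivity
      have hA : (0:ℝ) < 1 + p / (s + cB * s + s * (cB * s) / p) := by positivity
      have hB : (0:ℝ) < 1 + p * r^2 / (p * (1 - r^2) + max s (cB*s) + cE * s
          + max s (cB*s) * (cE * s) / p) := by positivity
      have hC : (0:ℝ) < p * (1 - r^2) / (s + cB * s) := by positivity
      rw [← Real.logb_div hA.ne' hB.ne', ← Real.logb_div (by positivity) hC.ne']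
      congr 1
      rw [hφdef]
      have h1 : (0:ℝ) < p*(1+cB) + cB*s := by positivity
      have h2 : (0:ℝ) < p^2*(1-r^2) + p*(max s (cB*s)) + p*cE*s
          + (max s (cB*s))*cE*s + p^2*r^2 := by positivity
      have h3 : (0:ℝ) < s + cB * s := by positivity
      field_simp
    · have hcont : ContinuousAt φ 0 := by
        apply ContinuousAt.div
        · fun_prop
        · fun_prop
        · have : max (0:ℝ) (cB*0) = 0 := by simp
          simp only [this]
          positivity
      have h0 : φ 0 = 1 := by
        have : max (0:ℝ) (cB*0) = 0 := by simp
        simp only [hφdef, this]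
        field_simp
        ring
      have h2 : Tendsto φ (𝓝[>] (0:ℝ)) (𝓝 (φ 0)) :=
        hcont.tendsto.mono_left nhdsWithin_le_nhds
      rwa [h0] at h2
  · -- upper bound
    set φ : ℝ → ℝ := fun s =>
      (((p+s)*(p+cE*s) - r^2*p^2) * ((p+cB*s)*(p+cE*s) - r^2*p^2) * (1+cB))
      / ((p+cE*s) * ((p*(1+cB)+cB*s)*(p+cE*s) - r^2*p^2*(1+cB)) * (p*(1-r^2))) with hφdef
    apply logb_tendsto_aux _ φ
    · filter_upwards [self_mem_nhdsWithin] with s hs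
      simp only [Set.mem_Ioi] at hs
      have h1cB : (0:ℝ) < 1 + cB := by linarith
      have hN1 : (0:ℝ) < (p+s)*(p+cE*s) - r^2*p^2 := by
        nlinarith [mul_pos hq (mul_pos hp hp), mul_pos hp (mul_pos hcE hs),
          mul_pos hp hs, mul_pos hs (mul_pos hcE hs)]
      have hN2 : (0:ℝ) < (p+cB*s)*(p+cE*s) - r^2*p^2 := by
        nlinarith [mul_pos hq (mul_pos hp hp), mul_pos hp (mul_pos hcE hs),
          mul_pos hp (mul_pos hcB hs), mul_pos (mul_pos hcB hs) (mul_pos hcE hs)]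
      have hDin : (0:ℝ) < (p*(1+cB)+cB*s)*(p+cE*s) - r^2*p^2*(1+cB) := by
        nlinarith [mul_pos (mul_pos hq (mul_pos hp hp)) h1cB,
          mul_pos (mul_pos (mul_pos hp h1cB) hcE) hs,
          mul_pos (mul_pos hcB hs) hp, mul_pos (mul_pos hcB hs) (mul_pos hcE hs)]
      have hD : (0:ℝ) < (p+cE*s)
          * ((p*(s+cB*s) + s*(cB*s))*(p+cE*s) - r^2*p^2*(s+cB*s)) := by
        have : (p*(s+cB*s) + s*(cB*s))*(p+cE*s) - r^2*p^2*(s+cB*s)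
            = s * ((p*(1+cB)+cB*s)*(p+cE*s) - r^2*p^2*(1+cB)) := by ring
        rw [this]; positivity
      have hC : (0:ℝ) < p * (1 - r^2) / (s + cB * s) := by positivity
      have hND : (0:ℝ) < ((p + s) * (p + cE * s) - r^2*p^2)
          * ((p + cB*s) * (p + cE*s) - r^2*p^2)
          / ((p + cE*s) * ((p*(s+cB*s) + s*(cB*s))*(p+cE*s) - r^2*p^2*(s+cB*s))) := by
        positivity
      rw [← Real.logb_div hND.ne' hC.ne']
      congr 1
      rw [hφdef]
      have h3 : (0:ℝ) < s + cB * s := by positivity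
      field_simp
    · have hd0 : (0:ℝ) < (p+cE*0) * ((p*(1+cB)+cB*0)*(p+cE*0) - r^2*p^2*(1+cB))
          * (p*(1-r^2)) := by
        have : (p+cE*0) * ((p*(1+cB)+cB*0)*(p+cE*0) - r^2*p^2*(1+cB)) * (p*(1-r^2))
            = p^4 * (1+cB) * (1-r^2)^2 := by ring
        rw [this]; positivity
      have hcont : ContinuousAt φ 0 := by
        apply ContinuousAt.div
        · fun_prop
        · fun_prop
        · exact hd0.ne'
      have h0 : φ 0 = 1 := by
        simp only [hφdef]
        rw [div_eq_one_iff_eq hd0.ne']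
        ring
      have h2 : Tendsto φ (𝓝[>] (0:ℝ)) (𝓝 (φ 0)) :=
        hcont.tendsto.mono_left nhdsWithin_le_nhds
      rwa [h0] at h2
end

section
/- Let $(X, Y)$ be jointly zero-mean circularly-symmetric complex Gaussian, with polar coordinates $X = R_X e^{i\Phi_X}$, $Y = R_Y e^{i\Phi_Y}$. Then $I(R_X; Y) = I(R_X; (R_Y, \Phi_Y)) = I(R_X; R_Y)$; that is, given only the envelope of $X$, the full complex observation $Y$ carries no more information than its envelope $R_Y$. -/
open MeasureTheory ProbabilityTheory Real

/-- Mutual information (in bits) between `X` and `Y` under `μ`, defined as the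
integral, w.r.t. the joint law, of the base-2 logarithm of the Radon–Nikodym
derivative of the joint law with respect to the product of the marginal laws. -/
noncomputable def mutualInfo {Ω α β : Type*} [MeasurableSpace Ω] [MeasurableSpace α]
    [MeasurableSpace β] (μ : Measure Ω) (X : Ω → α) (Y : Ω → β) : ℝ :=
  ∫ z, Real.logb 2 (((Measure.map (fun ω => (X ω, Y ω)) μ).rnDeriv
      ((Measure.map X μ).prod (Measure.map Y μ)) z).toReal)
    ∂(Measure.map (fun ω => (X ω, Y ω)) μ)

/-- Density (w.r.t. Lebesgue measure on `ℂ × ℂ`) of a jointly zero-mean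
circularly-symmetric complex Gaussian pair with covariance `[[a, c], [c̄, b]]`. -/
noncomputable def cscgPairDensity (a b : ℝ) (c : ℂ) (z : ℂ × ℂ) : ℝ :=
  (1 / (Real.pi ^ 2 * (a * b - ‖c‖ ^ 2))) *
    Real.exp (-(b * ‖z.1‖ ^ 2 + a * ‖z.2‖ ^ 2
        - 2 * ((starRingEnd ℂ) c * z.1 * (starRingEnd ℂ) z.2).re)
      / (a * b - ‖c‖ ^ 2))

section Aux
open scoped ENNReal
lemma cscg_pos {a b : ℝ} {c : ℂ} (hD : ‖c‖ ^ 2 < a * b) (z : ℂ × ℂ) :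
    0 < cscgPairDensity a b c z := by
  have h : 0 < a * b - ‖c‖ ^ 2 := sub_pos.2 hD
  unfold cscgPairDensity
  positivity

lemma cscg_cont (a b : ℝ) (c : ℂ) : Continuous (cscgPairDensity a b c) := by
  unfold cscgPairDensity
  have habs : Continuous (fun z : ℂ => ‖z‖) := continuous_norm
  fun_prop [continuous_norm]

lemma cscg_meas (a b : ℝ) (c : ℂ) :
    Measurable fun z => ENNReal.ofReal (cscgPairDensity a b c z) :=
  ENNReal.measurable_ofReal.comp (cscg_cont a b c).measurable

lemma cscg_rot (a b : ℝ) (c : ℂ) (θ : ℝ) (x y : ℂ) :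
    cscgPairDensity a b c (Complex.exp (θ * Complex.I) * x, Complex.exp (θ * Complex.I) * y)
      = cscgPairDensity a b c (x, y) := by
  set u := Complex.exp (θ * Complex.I) with hu
  have habsu : ‖u‖ = 1 := Complex.norm_exp_ofReal_mul_I θ
  have h1 : u * (starRingEnd ℂ) u = 1 := by
    rw [Complex.mul_conj, Complex.normSq_eq_norm_sq, habsu]; norm_num
  have habs : ∀ w : ℂ, ‖u * w‖ = ‖w‖ := by
    intro w; rw [norm_mul, habsu, one_mul]
  have h2 : (starRingEnd ℂ) c * (u * x) * (starRingEnd ℂ) (u * y)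
      = (starRingEnd ℂ) c * x * (starRingEnd ℂ) y := by
    rw [map_mul]
    calc (starRingEnd ℂ) c * (u * x) * ((starRingEnd ℂ) u * (starRingEnd ℂ) y)
        = ((starRingEnd ℂ) c * x * (starRingEnd ℂ) y) * (u * (starRingEnd ℂ) u) := by ring
      _ = (starRingEnd ℂ) c * x * (starRingEnd ℂ) y := by rw [h1, mul_one]
  unfold cscgPairDensity
  simp only [habs, h2]

lemma map_withDensity_comp {α β : Type*} [MeasurableSpace α] [MeasurableSpace β]
    (μ : Measure α) {T : α → β} (hT : Measurable T) {g : β → ℝ≥0∞} (hg : Measurable g) :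
    (μ.withDensity (fun x => g (T x))).map T = (μ.map T).withDensity g := by
  ext s hs
  rw [Measure.map_apply hT hs, withDensity_apply _ hs, withDensity_apply _ (hT hs),
    setLIntegral_map hs hg hT]

lemma map_withDensity_leftInv {α β : Type*} [MeasurableSpace α] [MeasurableSpace β]
    (μ : Measure α) {T : α → β} {T' : β → α} (hT : Measurable T) (hT' : Measurable T')
    (hinv : ∀ x, T' (T x) = x) {g : α → ℝ≥0∞} (hg : Measurable g) :
    (μ.withDensity g).map T = (μ.map T).withDensity (fun y => g (T' y)) := by
  have h : μ.withDensity g = μ.withDensity (fun x => (fun y => g (T' y)) (T x)) := by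
    apply withDensity_congr_ae
    filter_upwards with x
    simp only [hinv]
  rw [h, map_withDensity_comp μ hT (g := fun y => g (T' y)) (hg.comp hT')]

lemma meas_univ_zero_of_ae_zero {α : Type*} [MeasurableSpace α] {ν : Measure α}
    {f : α → ℝ≥0∞} (h : f =ᵐ[ν] 0) (hf : ∀ x, f x ≠ 0) : ν Set.univ = 0 := by
  have h' : ν {x | ¬ f x = 0} = 0 := by
    have h2 := h
    rw [Filter.EventuallyEq, ae_iff] at h2
    simpa using h2
  have he : {x | ¬ f x = 0} = Set.univ := Set.eq_univ_of_forall fun x => hf x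
  rwa [he] at h'

lemma vol_ac_fst {p : ℂ × ℂ → ℝ≥0∞} (hp : Measurable p) (hpos : ∀ z, 0 < p z) :
    (volume : Measure ℂ) ≪ ((volume : Measure (ℂ × ℂ)).withDensity p).map Prod.fst := by
  refine Measure.AbsolutelyContinuous.mk fun s hs h0 => ?_
  rw [Measure.map_apply measurable_fst hs] at h0
  have hpre : (Prod.fst ⁻¹' s : Set (ℂ × ℂ)) = s ×ˢ Set.univ := by
    ext z; simp [Set.mem_prod]
  rw [hpre, withDensity_apply _ (hs.prod MeasurableSet.univ), Measure.volume_eq_prod,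
    ← Measure.prod_restrict, Measure.restrict_univ,
    lintegral_prod _ hp.aemeasurable] at h0
  have hinner : Measurable fun x => ∫⁻ y, p (x, y) ∂(volume : Measure ℂ) :=
    hp.lintegral_prod_right'
  have h1 := (lintegral_eq_zero_iff hinner).mp h0
  have h2 : ∀ x : ℂ, (∫⁻ y, p (x, y) ∂(volume : Measure ℂ)) ≠ 0 := by
    intro x
    refine ne_of_gt ?_
    rw [lintegral_pos_iff_support (μ := (volume : Measure ℂ)) (f := fun y => p (x, y))
      (hp.comp measurable_prodMk_left)]
    have hsupp : Function.support (fun y => p (x, y)) = Set.univ :=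
      Set.eq_univ_of_forall fun y => (hpos (x, y)).ne'
    rw [hsupp]
    exact isOpen_univ.measure_pos _ ⟨0, trivial⟩
  have h3 := meas_univ_zero_of_ae_zero h1 h2
  rwa [Measure.restrict_apply_univ] at h3

lemma vol_ac_snd {p : ℂ × ℂ → ℝ≥0∞} (hp : Measurable p) (hpos : ∀ z, 0 < p z) :
    (volume : Measure ℂ) ≪ ((volume : Measure (ℂ × ℂ)).withDensity p).map Prod.snd := by
  refine Measure.AbsolutelyContinuous.mk fun t ht h0 => ?_
  by_contra hvt
  rw [Measure.map_apply measurable_snd ht] at h0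
  have hpre : (Prod.snd ⁻¹' t : Set (ℂ × ℂ)) = Set.univ ×ˢ t := by
    ext z; simp [Set.mem_prod]
  rw [hpre, withDensity_apply _ (MeasurableSet.univ.prod ht), Measure.volume_eq_prod,
    ← Measure.prod_restrict, Measure.restrict_univ,
    lintegral_prod _ hp.aemeasurable] at h0
  have hinner : Measurable fun x => ∫⁻ y in t, p (x, y) ∂(volume : Measure ℂ) :=
    hp.lintegral_prod_right'
  have h1 := (lintegral_eq_zero_iff hinner).mp h0
  have h2 : ∀ x : ℂ, (∫⁻ y in t, p (x, y) ∂(volume : Measure ℂ)) ≠ 0 := by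
    intro x
    refine ne_of_gt ?_
    rw [lintegral_pos_iff_support (μ := (volume : Measure ℂ).restrict t)
      (f := fun y => p (x, y)) (hp.comp measurable_prodMk_left)]
    have hsupp : Function.support (fun y => p (x, y)) = Set.univ :=
      Set.eq_univ_of_forall fun y => (hpos (x, y)).ne'
    rw [hsupp, Measure.restrict_apply_univ]
    exact lt_of_le_of_ne zero_le (Ne.symm hvt)
  have h3 := meas_univ_zero_of_ae_zero h1 h2
  exact absurd h3 (isOpen_univ.measure_pos (volume : Measure ℂ) ⟨0, trivial⟩).ne'

lemma rot_measurePreserving (θ : ℝ) :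
    MeasurePreserving (fun z : ℂ => Complex.exp (θ * Complex.I) * z) volume volume := by
  have h := (rotation (Circle.exp θ)).measurePreserving
  have he : ((rotation (Circle.exp θ)) : ℂ → ℂ) = fun z => Complex.exp (θ * Complex.I) * z := by
    funext z; rw [rotation_apply, Circle.coe_exp]
  rwa [he] at h

lemma lintegral_Ioc_add_periodic {F : ℝ → ℝ≥0∞} (hF : Measurable F)
    (hper : Function.Periodic F (2 * π)) (φ : ℝ) :
    ∫⁻ θ in Set.Ioc 0 (2 * π), F (θ + φ) = ∫⁻ θ in Set.Ioc 0 (2 * π), F θ := by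
  have hmp : MeasurePreserving (fun x : ℝ => x + φ) volume volume :=
    measurePreserving_add_right volume φ
  have hpre : (fun x : ℝ => x + φ) ⁻¹' Set.Ioc φ (φ + 2 * π) = Set.Ioc 0 (2 * π) := by
    ext x
    simp only [Set.mem_preimage, Set.mem_Ioc]
    constructor <;> (intro h; exact ⟨by linarith [h.1], by linarith [h.2]⟩)
  have h1 : ∫⁻ θ in Set.Ioc φ (φ + 2 * π), F θ
      = ∫⁻ θ in Set.Ioc 0 (2 * π), F (θ + φ) := by
    conv_lhs => rw [← hmp.map_eq]
    rw [setLIntegral_map measurableSet_Ioc hF hmp.measurable, hpre]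
  rw [← h1]
  have hfd1 := isAddFundamentalDomain_Ioc Real.two_pi_pos φ
  have hfd2 := isAddFundamentalDomain_Ioc Real.two_pi_pos 0
  have hinv : ∀ (g : AddSubgroup.zmultiples (2 * π)) (x : ℝ), F (g +ᵥ x) = F x := by
    rintro ⟨y, hy⟩ x
    obtain ⟨m, rfl⟩ := hy
    show F ((m • (2 * π) : ℝ) + x) = F x
    rw [zsmul_eq_mul, add_comm]
    exact (hper.int_mul m) x
  have h2 := hfd1.setLIntegral_eq hfd2 F hinv
  rwa [zero_add] at h2
end Aux

open scoped ENNReal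

theorem stmt_12 {Ω : Type*} [MeasurableSpace Ω] (μ : Measure Ω) [IsProbabilityMeasure μ]
    (X Y : Ω → ℂ) (hX : Measurable X) (hY : Measurable Y)
    (a b : ℝ) (c : ℂ) (ha : 0 < a) (hb : 0 < b) (hD : ‖c‖ ^ 2 < a * b)
    (hlaw : Measure.map (fun ω => (X ω, Y ω)) μ
      = volume.withDensity (fun z => ENNReal.ofReal (cscgPairDensity a b c z))) :
    mutualInfo μ (fun ω => ‖X ω‖) Y
        = mutualInfo μ (fun ω => ‖X ω‖)
            (fun ω => (‖Y ω‖, Complex.arg (Y ω)))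
    ∧ mutualInfo μ (fun ω => ‖X ω‖) Y
        = mutualInfo μ (fun ω => ‖X ω‖) (fun ω => ‖Y ω‖) := by
  classical
  -- basic measurability
  have habs : Measurable (fun z : ℂ => ‖z‖) := continuous_norm.measurable
  have hXY : Measurable fun ω => (X ω, Y ω) := hX.prodMk hY
  have hRX : Measurable fun ω => ‖X ω‖ := habs.comp hX
  have hRXY : Measurable fun ω => (‖X ω‖, Y ω) := hRX.prodMk hY
  set p : ℂ × ℂ → ℝ≥0∞ := fun z => ENNReal.ofReal (cscgPairDensity a b c z) with hpdef
  have hp : Measurable p := cscg_meas a b c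
  have hppos : ∀ z, 0 < p z := fun z => ENNReal.ofReal_pos.mpr (cscg_pos hD z)
  -- probability instances
  haveI : IsProbabilityMeasure (μ.map (fun ω => (X ω, Y ω))) :=
    Measure.isProbabilityMeasure_map hXY.aemeasurable
  haveI : IsProbabilityMeasure (μ.map X) := Measure.isProbabilityMeasure_map hX.aemeasurable
  haveI : IsProbabilityMeasure (μ.map Y) := Measure.isProbabilityMeasure_map hY.aemeasurable
  haveI : IsProbabilityMeasure (μ.map (fun ω => ‖X ω‖)) :=
    Measure.isProbabilityMeasure_map hRX.aemeasurable
  haveI : IsProbabilityMeasure (μ.map (fun ω => (‖X ω‖, Y ω))) :=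
    Measure.isProbabilityMeasure_map hRXY.aemeasurable
  -- marginals
  have hmX : μ.map X = (μ.map (fun ω => (X ω, Y ω))).map Prod.fst := by
    rw [Measure.map_map measurable_fst hXY]; rfl
  have hmY : μ.map Y = (μ.map (fun ω => (X ω, Y ω))).map Prod.snd := by
    rw [Measure.map_map measurable_snd hXY]; rfl
  have hacX : (volume : Measure ℂ) ≪ μ.map X := by
    rw [hmX, hlaw]; exact vol_ac_fst hp hppos
  have hacY : (volume : Measure ℂ) ≪ μ.map Y := by
    rw [hmY, hlaw]; exact vol_ac_snd hp hppos
  have hJ0P0 : μ.map (fun ω => (X ω, Y ω)) ≪ (μ.map X).prod (μ.map Y) := by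
    rw [hlaw]
    refine (withDensity_absolutelyContinuous _ _).trans ?_
    rw [Measure.volume_eq_prod]
    exact hacX.prod hacY
  -- the main joint law and product law for `(R_X, Y)`
  set J : Measure (ℝ × ℂ) := μ.map (fun ω => (‖X ω‖, Y ω)) with hJdef
  set P : Measure (ℝ × ℂ) :=
    (μ.map (fun ω => ‖X ω‖)).prod (μ.map Y) with hPdef
  haveI : IsProbabilityMeasure J := Measure.isProbabilityMeasure_map hRXY.aemeasurable
  haveI : IsProbabilityMeasure P := by rw [hPdef]; infer_instance
  have hJP : J ≪ P := by
    have h1 : J = (μ.map (fun ω => (X ω, Y ω))).map (Prod.map (fun z : ℂ => ‖z‖) id) := by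
      rw [Measure.map_map (habs.prodMap measurable_id) hXY]; rfl
    have h2 : P = ((μ.map X).prod (μ.map Y)).map (Prod.map (fun z : ℂ => ‖z‖) id) := by
      rw [← Measure.map_prod_map _ _ habs measurable_id, Measure.map_map habs hX,
        Measure.map_id]
      rfl
    rw [h1, h2]
    exact hJ0P0.map (habs.prodMap measurable_id)
  -- rotations
  set S : ℝ → ℂ × ℂ → ℂ × ℂ :=
    fun θ w => (Complex.exp (θ * Complex.I) * w.1, Complex.exp (θ * Complex.I) * w.2)
    with hSdef
  have hSmeas : ∀ θ, Measurable (S θ) :=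
    fun θ => (measurable_fst.const_mul _).prodMk (measurable_snd.const_mul _)
  have hSvol : ∀ θ, MeasurePreserving (S θ) (volume : Measure (ℂ × ℂ)) volume := by
    intro θ
    have h := (rot_measurePreserving θ).prod (rot_measurePreserving θ)
    rw [Measure.volume_eq_prod]
    exact h
  have hScscg : ∀ θ, (fun w => p (S θ w)) = p := by
    intro θ; funext w
    exact congrArg ENNReal.ofReal (cscg_rot a b c θ w.1 w.2)
  have hSinv : ∀ θ, (μ.map (fun ω => (X ω, Y ω))).map (S θ) = μ.map (fun ω => (X ω, Y ω)) := by
    intro θ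
    rw [hlaw]
    calc (volume.withDensity p).map (S θ)
        = (volume.withDensity (fun w => p (S θ w))).map (S θ) := by rw [hScscg θ]
      _ = (volume.map (S θ)).withDensity p := map_withDensity_comp volume (hSmeas θ) hp
      _ = volume.withDensity p := by rw [(hSvol θ).map_eq]
  have hYrot : ∀ θ : ℝ, (μ.map Y).map (fun y => Complex.exp (θ * Complex.I) * y)
      = μ.map Y := by
    intro θ
    have hmult : Measurable fun y : ℂ => Complex.exp (θ * Complex.I) * y :=
      measurable_id.const_mul _
    rw [hmY]
    calc ((μ.map (fun ω => (X ω, Y ω))).map Prod.snd).map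
          (fun y => Complex.exp (θ * Complex.I) * y)
        = (μ.map (fun ω => (X ω, Y ω))).map
            ((fun y => Complex.exp (θ * Complex.I) * y) ∘ Prod.snd) :=
          Measure.map_map hmult measurable_snd
      _ = (μ.map (fun ω => (X ω, Y ω))).map (Prod.snd ∘ S θ) := rfl
      _ = ((μ.map (fun ω => (X ω, Y ω))).map (S θ)).map Prod.snd :=
          (Measure.map_map measurable_snd (hSmeas θ)).symm
      _ = (μ.map (fun ω => (X ω, Y ω))).map Prod.snd := by rw [hSinv θ]
  set R : ℝ → ℝ × ℂ → ℝ × ℂ :=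
    fun θ w => (w.1, Complex.exp (θ * Complex.I) * w.2) with hRdef
  have hRmeas : ∀ θ, Measurable (R θ) :=
    fun θ => measurable_fst.prodMk (measurable_snd.const_mul _)
  have hπ0 : Measurable fun w : ℂ × ℂ => (‖w.1‖, w.2) :=
    (habs.comp measurable_fst).prodMk measurable_snd
  have hJrot : ∀ θ, J.map (R θ) = J := by
    intro θ
    have h1 : (R θ) ∘ (fun ω => (‖X ω‖, Y ω))
        = (fun w : ℂ × ℂ => (‖w.1‖, w.2)) ∘ (S θ) ∘ (fun ω => (X ω, Y ω)) := by
      funext ω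
      show (‖X ω‖, Complex.exp (θ * Complex.I) * Y ω)
        = (‖Complex.exp (θ * Complex.I) * X ω‖, Complex.exp (θ * Complex.I) * Y ω)
      rw [norm_mul, Complex.norm_exp_ofReal_mul_I, one_mul]
    calc J.map (R θ)
        = μ.map ((R θ) ∘ (fun ω => (‖X ω‖, Y ω))) :=
          Measure.map_map (hRmeas θ) hRXY
      _ = μ.map ((fun w : ℂ × ℂ => (‖w.1‖, w.2)) ∘ ((S θ) ∘ (fun ω => (X ω, Y ω)))) := by
          rw [h1]
      _ = (μ.map ((S θ) ∘ (fun ω => (X ω, Y ω)))).map (fun w : ℂ × ℂ => (‖w.1‖, w.2)) :=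
          (Measure.map_map hπ0 ((hSmeas θ).comp hXY)).symm
      _ = ((μ.map (fun ω => (X ω, Y ω))).map (S θ)).map (fun w : ℂ × ℂ => (‖w.1‖, w.2)) := by
          rw [Measure.map_map (hSmeas θ) hXY]
      _ = (μ.map (fun ω => (X ω, Y ω))).map (fun w : ℂ × ℂ => (‖w.1‖, w.2)) := by
          rw [hSinv θ]
      _ = J := by rw [Measure.map_map hπ0 hXY]; rfl
  have hProt : ∀ θ, P.map (R θ) = P := by
    intro θ
    have hmult : Measurable fun y : ℂ => Complex.exp (θ * Complex.I) * y :=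
      measurable_id.const_mul _
    have he : R θ = Prod.map (id : ℝ → ℝ) (fun y => Complex.exp (θ * Complex.I) * y) := rfl
    rw [hPdef, he, ← Measure.map_prod_map _ _ measurable_id hmult, Measure.map_id, hYrot θ]
  -- Radon–Nikodym derivative and its rotational a.e.-invariance
  set f : ℝ × ℂ → ℝ≥0∞ := J.rnDeriv P with hfdef
  have hfmeas : Measurable f := Measure.measurable_rnDeriv J P
  have hJwd : P.withDensity f = J := Measure.withDensity_rnDeriv_eq J P hJP
  have hfrot : ∀ θ, (fun z => f (R θ z)) =ᵐ[P] f := by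
    intro θ
    have hQ : (P.withDensity (fun z => f (R θ z))).map (R θ) = P.withDensity f := by
      rw [map_withDensity_comp P (hRmeas θ) hfmeas, hProt θ]
    have hRR : (R (-θ)) ∘ (R θ) = id := by
      funext z
      show (z.1, Complex.exp ((-θ : ℝ) * Complex.I) * (Complex.exp (θ * Complex.I) * z.2)) = z
      rw [← mul_assoc, ← Complex.exp_add]
      have hzero : ((-θ : ℝ) : ℂ) * Complex.I + (θ : ℝ) * Complex.I = 0 := by
        push_cast; ring
      rw [hzero, Complex.exp_zero, one_mul]
    have hPf : P.withDensity (fun z => f (R θ z)) = J := by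
      calc P.withDensity (fun z => f (R θ z))
          = ((P.withDensity (fun z => f (R θ z))).map (R θ)).map (R (-θ)) := by
            rw [Measure.map_map (hRmeas (-θ)) (hRmeas θ), hRR, Measure.map_id]
        _ = (P.withDensity f).map (R (-θ)) := by rw [hQ]
        _ = J.map (R (-θ)) := by rw [hJwd]
        _ = J := hJrot (-θ)
    have h3 := Measure.rnDeriv_withDensity P (f := fun z => f (R θ z)) (hfmeas.comp (hRmeas θ))
    rw [hPf] at h3
    exact h3.symm
  -- averaging over the phase
  set ν : Measure ℝ := volume.restrict (Set.Ioc 0 (2 * π)) with hνdef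
  have hintmeas : Measurable fun q : (ℝ × ℂ) × ℝ => f (R q.2 q.1) := by
    apply hfmeas.comp
    exact (measurable_fst.fst).prodMk
      ((Complex.measurable_exp.comp
        ((Complex.measurable_ofReal.comp measurable_snd).mul_const Complex.I)).mul
        measurable_fst.snd)
  set g : ℝ × ℂ → ℝ≥0∞ := fun z => ∫⁻ θ, f (R θ z) ∂ν with hgdef
  have hgmeas : Measurable g := hintmeas.lintegral_prod_right'
  set C : ℝ≥0∞ := ENNReal.ofReal (2 * π) with hCdef
  have hC0 : C ≠ 0 := (ENNReal.ofReal_pos.mpr Real.two_pi_pos).ne'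
  have hCtop : C ≠ ⊤ := ENNReal.ofReal_ne_top
  have hgae : g =ᵐ[P] fun z => f z * C := by
    set B : Set ((ℝ × ℂ) × ℝ) := {q | f (R q.2 q.1) ≠ f q.1} with hBdef
    have hBmeas : MeasurableSet B := by
      have h1 : Measurable fun q : (ℝ × ℂ) × ℝ => (f (R q.2 q.1), f q.1) :=
        hintmeas.prodMk (hfmeas.comp measurable_fst)
      have h2 : B = (fun q : (ℝ × ℂ) × ℝ => (f (R q.2 q.1), f q.1)) ⁻¹'
          (Set.diagonal ℝ≥0∞)ᶜ := by
        ext q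
        simp [hBdef, Set.mem_diagonal_iff]
      rw [h2]
      exact h1 isClosed_diagonal.measurableSet.compl
    have hswap : (P.prod ν) B = 0 := by
      have hsw : (P.prod ν) B = (ν.prod P) (Prod.swap ⁻¹' B) := by
        rw [← Measure.prod_swap, Measure.map_apply measurable_swap hBmeas]
      rw [hsw, Measure.prod_apply (measurable_swap hBmeas)]
      have hz : ∀ θ : ℝ, P (Prod.mk θ ⁻¹' (Prod.swap ⁻¹' B)) = 0 := by
        intro θ
        have h4 := hfrot θ
        rw [Filter.EventuallyEq, ae_iff] at h4
        exact h4
      simp [hz]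
    have hae := Measure.measure_ae_null_of_prod_null hswap
    filter_upwards [hae] with z hz
    have hz' : ν (Prod.mk z ⁻¹' B) = 0 := hz
    have hzz : ∀ᵐ θ ∂ν, f (R θ z) = f z := by
      rw [ae_iff]
      exact hz'
    calc g z = ∫⁻ _, f z ∂ν := lintegral_congr_ae hzz
      _ = f z * ν Set.univ := lintegral_const _
      _ = f z * C := by
          rw [hνdef, Measure.restrict_apply_univ, Real.volume_Ioc, sub_zero]
  have hgrot : ∀ φ z, g (R φ z) = g z := by
    intro φ z
    have hRR : ∀ θ, R θ (R φ z) = R (θ + φ) z := by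
      intro θ
      show (z.1, Complex.exp (θ * Complex.I) * (Complex.exp (φ * Complex.I) * z.2))
        = (z.1, Complex.exp (((θ + φ : ℝ) : ℂ) * Complex.I) * z.2)
      rw [← mul_assoc, ← Complex.exp_add]
      have : ((θ : ℂ)) * Complex.I + (φ : ℂ) * Complex.I = ((θ + φ : ℝ) : ℂ) * Complex.I := by
        push_cast; ring
      rw [this]
    have hFmeas : Measurable fun θ => f (R θ z) :=
      hintmeas.comp (measurable_const.prodMk measurable_id)
    have hFper : Function.Periodic (fun θ => f (R θ z)) (2 * π) := by
      intro θ
      have : R (θ + 2 * π) z = R θ z := by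
        show (z.1, Complex.exp (((θ + 2 * π : ℝ) : ℂ) * Complex.I) * z.2)
          = (z.1, Complex.exp ((θ : ℂ) * Complex.I) * z.2)
        have h5 : ((θ + 2 * π : ℝ) : ℂ) * Complex.I
            = (θ : ℂ) * Complex.I + 2 * (π : ℂ) * Complex.I := by push_cast; ring
        rw [h5, Complex.exp_add, Complex.exp_two_pi_mul_I, mul_one]
      simp only [this]
    calc g (R φ z) = ∫⁻ θ, f (R θ (R φ z)) ∂ν := rfl
      _ = ∫⁻ θ, (fun t => f (R t z)) (θ + φ) ∂ν := by
          apply lintegral_congr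
          intro θ
          rw [hRR θ]
      _ = ∫⁻ θ, f (R θ z) ∂ν := lintegral_Ioc_add_periodic hFmeas hFper φ
      _ = g z := rfl
  have hgabs : ∀ z : ℝ × ℂ, g z = g (z.1, (‖z.2‖ : ℂ)) := by
    intro z
    have h1 : R (Complex.arg z.2) (z.1, (‖z.2‖ : ℂ)) = z := by
      show (z.1, Complex.exp ((Complex.arg z.2 : ℂ) * Complex.I) * (‖z.2‖ : ℂ)) = z
      rw [mul_comm, Complex.norm_mul_exp_arg_mul_I]
    conv_lhs => rw [← h1]
    exact hgrot _ _
  set k : ℝ × ℝ → ℝ≥0∞ := fun w => g (w.1, ((w.2 : ℝ) : ℂ)) * C⁻¹ with hkdef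
  have hkmeas : Measurable k :=
    (hgmeas.comp (measurable_fst.prodMk
      (Complex.measurable_ofReal.comp measurable_snd))).mul_const _
  set π2 : ℝ × ℂ → ℝ × ℝ := fun z => (z.1, ‖z.2‖) with hπ2def
  have hπ2meas : Measurable π2 := measurable_fst.prodMk (habs.comp measurable_snd)
  have hkπ : ∀ z, k (π2 z) = g z * C⁻¹ := by
    intro z
    show g ((z.1, ‖z.2‖).1, (((z.1, ‖z.2‖).2 : ℝ) : ℂ)) * C⁻¹ = g z * C⁻¹
    rw [← hgabs]
  have hfk : f =ᵐ[P] fun z => k (π2 z) := by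
    filter_upwards [hgae] with z hz
    rw [hkπ z, hz, mul_assoc, ENNReal.mul_inv_cancel hC0 hCtop, mul_one]
  have hJk : J = P.withDensity (fun z => k (π2 z)) := by
    rw [← hJwd]
    exact withDensity_congr_ae hfk
  -- measurability of the integrand builder
  have hlogb : Measurable (Real.logb 2) := by
    have : Real.logb 2 = fun x => Real.log x / Real.log 2 := rfl
    rw [this]
    exact Real.measurable_log.div_const _
  -- ===== Equality 2 =====
  have heq2 : mutualInfo μ (fun ω => ‖X ω‖) Y
      = mutualInfo μ (fun ω => ‖X ω‖) (fun ω => ‖Y ω‖) := by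
    have hmapπJ : J.map π2 = μ.map (fun ω => (‖X ω‖, ‖Y ω‖)) := by
      rw [hJdef, Measure.map_map hπ2meas hRXY]; rfl
    have hmapπP : P.map π2
        = (μ.map (fun ω => ‖X ω‖)).prod (μ.map (fun ω => ‖Y ω‖)) := by
      have he : π2 = Prod.map (id : ℝ → ℝ) (fun z : ℂ => ‖z‖) := rfl
      rw [hPdef, he, ← Measure.map_prod_map _ _ measurable_id habs, Measure.map_id,
        Measure.map_map habs hY]
      rfl
    have hwd2 : J.map π2 = (P.map π2).withDensity k := by
      rw [hJk]
      exact map_withDensity_comp P hπ2meas hkmeas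
    have hrn2 : (J.map π2).rnDeriv (P.map π2) =ᵐ[P.map π2] k := by
      rw [hwd2]
      exact Measure.rnDeriv_withDensity _ hkmeas
    have hac2 : J.map π2 ≪ P.map π2 := by
      rw [hwd2]
      exact withDensity_absolutelyContinuous _ _
    have hsm : AEStronglyMeasurable (fun w => Real.logb 2 ((k w).toReal)) (J.map π2) :=
      (hlogb.comp hkmeas.ennreal_toReal).aestronglyMeasurable
    have hchain : ∫ z, Real.logb 2 ((J.rnDeriv P z).toReal) ∂J
        = ∫ w, Real.logb 2 (((J.map π2).rnDeriv (P.map π2) w).toReal) ∂(J.map π2) := by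
      calc ∫ z, Real.logb 2 ((J.rnDeriv P z).toReal) ∂J
          = ∫ z, Real.logb 2 ((k (π2 z)).toReal) ∂J := by
            refine integral_congr_ae ?_
            filter_upwards [hJP.ae_eq hfk] with z hz
            rw [hfdef] at hz
            rw [hz]
        _ = ∫ w, Real.logb 2 ((k w).toReal) ∂(J.map π2) :=
            (integral_map hπ2meas.aemeasurable hsm).symm
        _ = ∫ w, Real.logb 2 (((J.map π2).rnDeriv (P.map π2) w).toReal) ∂(J.map π2) := by
            refine integral_congr_ae ?_
            filter_upwards [hac2.ae_eq hrn2] with w hw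
            rw [hw]
    simp only [mutualInfo]
    rw [← hJdef, ← hPdef, ← hmapπJ, ← hmapπP]
    exact hchain
  -- ===== Equality 1 =====
  have heq1 : mutualInfo μ (fun ω => ‖X ω‖) Y
      = mutualInfo μ (fun ω => ‖X ω‖)
          (fun ω => (‖Y ω‖, Complex.arg (Y ω))) := by
    set E : ℝ × ℂ → ℝ × (ℝ × ℝ) :=
      fun z => (z.1, (‖z.2‖, Complex.arg z.2)) with hEdef
    set E' : ℝ × (ℝ × ℝ) → ℝ × ℂ :=
      fun q => (q.1, ((q.2.1 : ℝ) : ℂ) * Complex.exp ((q.2.2 : ℂ) * Complex.I)) with hE'def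
    have hemeas : Measurable fun y : ℂ => (‖y‖, Complex.arg y) :=
      habs.prodMk Complex.measurable_arg
    have hEmeas : Measurable E := measurable_fst.prodMk (hemeas.comp measurable_snd)
    have hE'meas : Measurable E' := by
      refine measurable_fst.prodMk ?_
      exact (Complex.measurable_ofReal.comp measurable_snd.fst).mul
        (Complex.measurable_exp.comp
          ((Complex.measurable_ofReal.comp measurable_snd.snd).mul_const Complex.I))
    have hinvE : ∀ z, E' (E z) = z := by
      intro z
      show (z.1, (‖z.2‖ : ℂ) * Complex.exp ((Complex.arg z.2 : ℂ) * Complex.I)) = z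
      rw [Complex.norm_mul_exp_arg_mul_I]
    have hmapEJ : J.map E
        = μ.map (fun ω => (‖X ω‖, (‖Y ω‖, Complex.arg (Y ω)))) := by
      rw [hJdef, Measure.map_map hEmeas hRXY]; rfl
    have hmapEP : P.map E
        = (μ.map (fun ω => ‖X ω‖)).prod
            (μ.map (fun ω => (‖Y ω‖, Complex.arg (Y ω)))) := by
      have he : E = Prod.map (id : ℝ → ℝ) (fun y => (‖y‖, Complex.arg y)) := rfl
      rw [hPdef, he, ← Measure.map_prod_map _ _ measurable_id hemeas, Measure.map_id,
        Measure.map_map hemeas hY]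
      rfl
    have hwd1 : J.map E = (P.map E).withDensity (fun q => f (E' q)) := by
      rw [← hJwd]
      exact map_withDensity_leftInv P hEmeas hE'meas hinvE hfmeas
    have hrn1 : (J.map E).rnDeriv (P.map E) =ᵐ[P.map E] fun q => f (E' q) := by
      rw [hwd1]
      exact Measure.rnDeriv_withDensity _ (hfmeas.comp hE'meas)
    have hac1 : J.map E ≪ P.map E := by
      rw [hwd1]
      exact withDensity_absolutelyContinuous _ _
    have hsm : AEStronglyMeasurable (fun q => Real.logb 2 ((f (E' q)).toReal)) (J.map E) :=
      (hlogb.comp ((hfmeas.comp hE'meas).ennreal_toReal)).aestronglyMeasurable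
    have hchain : ∫ z, Real.logb 2 ((J.rnDeriv P z).toReal) ∂J
        = ∫ q, Real.logb 2 (((J.map E).rnDeriv (P.map E) q).toReal) ∂(J.map E) := by
      calc ∫ z, Real.logb 2 ((J.rnDeriv P z).toReal) ∂J
          = ∫ z, Real.logb 2 ((f (E' (E z))).toReal) ∂J := by
            refine integral_congr_ae ?_
            filter_upwards with z
            rw [hinvE z, hfdef]
        _ = ∫ q, Real.logb 2 ((f (E' q)).toReal) ∂(J.map E) :=
            (integral_map hEmeas.aemeasurable hsm).symm
        _ = ∫ q, Real.logb 2 (((J.map E).rnDeriv (P.map E) q).toReal) ∂(J.map E) := by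
            refine integral_congr_ae ?_
            filter_upwards [hac1.ae_eq hrn1] with q hq
            rw [hq]
    simp only [mutualInfo]
    rw [← hJdef, ← hPdef, ← hmapEJ, ← hmapEP]
    exact hchain
  exact ⟨heq1, heq2⟩
end
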